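/- Let n be an even positive integer with n ≥ 10 or n = 4. If G is a connected graph on n vertices and there exists a subset S of V(G) with o(G − S) ≥ |S| + 2, then G has at most C(n-2,2) + 2 edges. -/

import Mathlib

open SimpleGraph Finset

/-- The number of odd components (connected components of odd order) of a graph. -/
noncomputable def oddComp {α : Type*} (H : SimpleGraph α) : ℕ :=
  Nat.card {c : H.ConnectedComponent // Odd (Nat.card c.supp)}

lemma two_mul_choose_two (n : ℕ) : 2 * n.choose 2 = n * (n - 1) := by
  induction n with
  | zero => simp
  | succ m ih =>
    rw [Nat.choose_succ_succ, Nat.choose_one_right, Nat.mul_add, ih]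
    cases m with
    | zero => simp
    | succ l => simp only [Nat.succ_sub_one]; ring

lemma sum_sq_aux {ι : Type*} (t : Finset ι) (F : ι → ℕ) (h1 : ∀ i ∈ t, 1 ≤ F i) :
    (∑ i ∈ t, F i * F i) + t.card ≤
      ((∑ i ∈ t, F i) - t.card) * ((∑ i ∈ t, F i) - t.card) + 2 * ∑ i ∈ t, F i := by
  set B := ∑ i ∈ t, (F i - 1) with hB
  have hsum : ∑ i ∈ t, F i = B + t.card := by
    calc ∑ i ∈ t, F i = ∑ i ∈ t, ((F i - 1) + 1) :=
          Finset.sum_congr rfl (fun i hi => by have := h1 i hi; omega)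
      _ = B + t.card := by rw [Finset.sum_add_distrib]; simp [hB]
  have hsq : ∑ i ∈ t, F i * F i = (∑ i ∈ t, (F i - 1) * (F i - 1)) + (2 * B + t.card) := by
    calc ∑ i ∈ t, F i * F i
        = ∑ i ∈ t, ((F i - 1) * (F i - 1) + (2 * (F i - 1) + 1)) := by
          refine Finset.sum_congr rfl (fun i hi => ?_)
          have := h1 i hi
          obtain ⟨b, hb⟩ : ∃ b, F i = b + 1 := ⟨F i - 1, by omega⟩
          rw [hb]
          simp only [Nat.add_sub_cancel]
          ring
      _ = (∑ i ∈ t, (F i - 1) * (F i - 1)) + (2 * B + t.card) := by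
          rw [Finset.sum_add_distrib, Finset.sum_add_distrib, ← Finset.mul_sum]
          simp [hB]
  have hle : ∀ i ∈ t, F i - 1 ≤ B := fun i hi =>
    hB ▸ Finset.single_le_sum (f := fun i => F i - 1) (fun j _ => Nat.zero_le _) hi
  have hbb : ∑ i ∈ t, (F i - 1) * (F i - 1) ≤ B * B := by
    calc ∑ i ∈ t, (F i - 1) * (F i - 1) ≤ ∑ i ∈ t, (F i - 1) * B :=
          Finset.sum_le_sum (fun i hi => Nat.mul_le_mul_left _ (hle i hi))
      _ = B * B := by rw [← Finset.sum_mul]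
  have : (∑ i ∈ t, F i) - t.card = B := by omega
  rw [this, hsq]
  omega

lemma arith (EG EK Q s m k d n3 : ℕ) (h1 : 1 ≤ s) (h2 : s + 2 ≤ k) (hm : m = k + d)
    (hn : s + m = n3 + 3) (hcase : 10 ≤ n3 + 3 ∨ n3 + 3 = 4)
    (hA : 2 * EG + 2 * EK ≤ (n3 + 3) * (n3 + 2)) (hB : 2 * EK + Q = m * m)
    (hC : Q + k ≤ d * d + 2 * m) :
    2 * EG ≤ (n3 + 1) * n3 + 4 := by
  subst hm
  rcases hcase with h | h
  · have hs2 : 2 * s ≤ n3 + 1 := by omega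
    zify at *
    nlinarith [mul_nonneg (by linarith : (0:ℤ) ≤ (s:ℤ) - 1)
        (by linarith : (0:ℤ) ≤ 4 * ((n3:ℤ) + 3) - 6 * s - 16),
      mul_nonneg (by linarith : (0:ℤ) ≤ (k:ℤ) - s - 2)
        (by linarith : (0:ℤ) ≤ (k:ℤ) + 2 * d - 1 - s)]
  · have hn3 : n3 = 1 := by omega
    subst hn3
    have hs : s = 1 := by omega
    have hk : k = 3 := by omega
    have hd : d = 0 := by omega
    subst hs; subst hk; subst hd
    omega

open scoped Classical in
/-- The component (or `none`) of a vertex relative to `G.induce Sᶜ`. -/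
noncomputable def compO {n : ℕ} (G : SimpleGraph (Fin n)) (S : Set (Fin n)) (u : Fin n) :
    Option (G.induce Sᶜ).ConnectedComponent :=
  if h : u ∈ Sᶜ then some ((G.induce Sᶜ).connectedComponentMk ⟨u, h⟩) else none

/-- The graph of "cross pairs": pairs of vertices outside `S` lying in different
components of `G.induce Sᶜ`. -/
def crossG {n : ℕ} (G : SimpleGraph (Fin n)) (S : Set (Fin n)) : SimpleGraph (Fin n) where
  Adj u v := compO G S u ≠ none ∧ compO G S v ≠ none ∧ compO G S u ≠ compO G S v
  symm := ⟨fun u v (h : _ ∧ _ ∧ _) => ⟨h.2.1, h.1, h.2.2.symm⟩⟩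
  loopless := ⟨fun u (h : _ ∧ _ ∧ _) => h.2.2 rfl⟩

lemma compO_ne_none_iff {n : ℕ} (G : SimpleGraph (Fin n)) (S : Set (Fin n)) (u : Fin n) :
    compO G S u ≠ none ↔ u ∈ Sᶜ := by
  unfold compO
  split <;> simp_all

lemma compO_eq_some {n : ℕ} (G : SimpleGraph (Fin n)) (S : Set (Fin n)) (u : Fin n)
    (h : u ∈ Sᶜ) : compO G S u = some ((G.induce Sᶜ).connectedComponentMk ⟨u, h⟩) := by
  unfold compO
  split <;> simp_all

lemma crossG_adj {n : ℕ} (G : SimpleGraph (Fin n)) (S : Set (Fin n)) (u v : Fin n) :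
    (crossG G S).Adj u v ↔
      compO G S u ≠ none ∧ compO G S v ≠ none ∧ compO G S u ≠ compO G S v := Iff.rfl

theorem size_bound_of_many_odd_components (n : ℕ) (hnev : Even n)
    (hn : 10 ≤ n ∨ n = 4) (G : SimpleGraph (Fin n)) (hconn : G.Connected)
    (S : Set (Fin n)) (hS : S.ncard + 2 ≤ oddComp (G.induce Sᶜ)) :
    G.edgeSet.ncard ≤ (n - 2).choose 2 + 2 := by
  classical
  haveI : Fintype ↥Sᶜ := Fintype.ofFinite _
  haveI : Fintype (G.induce Sᶜ).ConnectedComponent := Fintype.ofFinite _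
  have hn4 : 4 ≤ n := by omega
  -- oddComp is at most the number of components
  have hodd_le : oddComp (G.induce Sᶜ) ≤ Nat.card (G.induce Sᶜ).ConnectedComponent :=
    Finite.card_subtype_le _
  -- S is nonempty
  have hS0 : S ≠ ∅ := by
    rintro rfl
    have hsub : Subsingleton G.ConnectedComponent :=
      ⟨ConnectedComponent.ind₂ fun u v => ConnectedComponent.sound (hconn.preconnected u v)⟩
    have h1 : Nat.card (G.induce (∅ : Set (Fin n))ᶜ).ConnectedComponent
        = Nat.card G.ConnectedComponent := by
      rw [Set.compl_empty]
      exact Nat.card_congr (induceUnivIso G).connectedComponentEquiv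
    have h2 : Nat.card G.ConnectedComponent ≤ 1 := Finite.card_le_one_iff_subsingleton.mpr hsub
    rw [Set.ncard_empty] at hS
    omega
  have hs1 : 1 ≤ S.ncard := by
    rw [Nat.one_le_iff_ne_zero]
    intro h
    exact hS0 ((Set.ncard_eq_zero (Set.toFinite S)).mp h)
  set T : Finset (Fin n) := Sᶜ.toFinset with hT
  set K : SimpleGraph (Fin n) := crossG G S with hK
  set F : Option (G.induce Sᶜ).ConnectedComponent → ℕ :=
    fun o => (T.filter fun u => compO G S u = o).card with hF
  set I : Finset (Option (G.induce Sᶜ).ConnectedComponent) := T.image (compO G S) with hI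
  -- G and K are edge-disjoint
  have hdisjKG : Disjoint G K := by
    rw [disjoint_iff]
    ext u v
    simp only [inf_adj, bot_adj, iff_false, not_and]
    intro hadj hKadj
    obtain ⟨h1, h2, hne⟩ := (crossG_adj G S u v).mp hKadj
    have hu : u ∈ Sᶜ := (compO_ne_none_iff G S u).mp h1
    have hv : v ∈ Sᶜ := (compO_ne_none_iff G S v).mp h2
    apply hne
    rw [compO_eq_some G S u hu, compO_eq_some G S v hv]
    exact congrArg some (ConnectedComponent.sound (Adj.reachable (by exact hadj)))
  have hEdges : G.edgeFinset.card + K.edgeFinset.card ≤ n.choose 2 := by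
    have hu : G.edgeFinset ∪ K.edgeFinset ⊆ (⊤ : SimpleGraph (Fin n)).edgeFinset :=
      Finset.union_subset (edgeFinset_mono le_top) (edgeFinset_mono le_top)
    have := Finset.card_le_card hu
    rw [Finset.card_union_of_disjoint (disjoint_edgeFinset.mpr hdisjKG)] at this
    rwa [card_edgeFinset_top_eq_card_choose_two, Fintype.card_fin] at this
  -- degrees of K
  have hdeg0 : ∀ v ∈ (Finset.univ : Finset (Fin n)), v ∉ T → K.degree v = 0 := by
    intro v _ hv
    have hne : K.neighborFinset v = ∅ := by
      ext u
      simp only [mem_neighborFinset, Finset.notMem_empty, iff_false]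
      intro hadj
      obtain ⟨h1, _, _⟩ := (crossG_adj G S v u).mp hadj
      exact hv (Set.mem_toFinset.mpr ((compO_ne_none_iff G S v).mp h1))
    rw [← card_neighborFinset_eq_degree, hne, Finset.card_empty]
  have hdegF : ∀ v ∈ T, K.degree v + F (compO G S v) = T.card := by
    intro v hv
    have hvS : v ∈ Sᶜ := Set.mem_toFinset.mp hv
    have hnb : K.neighborFinset v = T.filter (fun u => ¬ (compO G S u = compO G S v)) := by
      ext u
      simp only [mem_neighborFinset, crossG_adj, Finset.mem_filter, Set.mem_toFinset]
      constructor
      · rintro ⟨_, h2, h3⟩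
        exact ⟨Set.mem_toFinset.mpr ((compO_ne_none_iff G S u).mp h2), fun e => h3 e.symm⟩
      · rintro ⟨huT, hne⟩
        exact ⟨(compO_ne_none_iff G S v).mpr hvS,
          (compO_ne_none_iff G S u).mpr (Set.mem_toFinset.mp huT), fun e => hne e.symm⟩
    have hdv : K.degree v = (T.filter (fun u => ¬ (compO G S u = compO G S v))).card := by
      rw [← card_neighborFinset_eq_degree, hnb]
    have hsplit := Finset.card_filter_add_card_filter_not
      (s := T) (p := fun u => compO G S u = compO G S v)
    have hFv : F (compO G S v) = (T.filter (fun u => compO G S u = compO G S v)).card := rfl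
    omega
  have hsum_deg : ∑ v ∈ T, (K.degree v + F (compO G S v)) = T.card * T.card := by
    rw [Finset.sum_congr rfl hdegF, Finset.sum_const, smul_eq_mul]
  have hEK : ∑ v ∈ T, K.degree v = 2 * K.edgeFinset.card := by
    rw [← sum_degrees_eq_twice_card_edges]
    exact Finset.sum_subset (Finset.subset_univ T) (fun v hv hvt => hdeg0 v hv hvt)
  have hfib : ∑ v ∈ T, F (compO G S v) = ∑ o ∈ I, F o * F o := by
    have hfw := Finset.sum_fiberwise_of_maps_to (s := T) (t := I) (g := compO G S)
      (fun x hx => Finset.mem_image_of_mem _ hx) (fun v => F (compO G S v))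
    rw [← hfw]
    refine Finset.sum_congr rfl (fun o ho => ?_)
    rw [Finset.sum_congr rfl (fun v hv => by rw [(Finset.mem_filter.mp hv).2]),
      Finset.sum_const, smul_eq_mul]
  have h2EK : 2 * K.edgeFinset.card + (∑ o ∈ I, F o * F o) = T.card * T.card := by
    rw [← hEK, ← hfib, ← Finset.sum_add_distrib]
    exact hsum_deg
  -- fibers are nonempty
  have hF1 : ∀ o ∈ I, 1 ≤ F o := by
    intro o ho
    obtain ⟨u, hu, rfl⟩ := Finset.mem_image.mp ho
    have : u ∈ T.filter (fun w => compO G S w = compO G S u) :=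
      Finset.mem_filter.mpr ⟨hu, rfl⟩
    exact Finset.card_pos.mpr ⟨u, this⟩
  have hsumF : ∑ o ∈ I, F o = T.card := (Finset.card_eq_sum_card_image (compO G S) T).symm
  have hIcard : I.card = Fintype.card (G.induce Sᶜ).ConnectedComponent := by
    have hIeq : I = Finset.univ.image some := by
      apply Finset.Subset.antisymm
      · intro o ho
        obtain ⟨u, hu, rfl⟩ := Finset.mem_image.mp ho
        have huS : u ∈ Sᶜ := Set.mem_toFinset.mp hu
        rw [compO_eq_some G S u huS]
        exact Finset.mem_image_of_mem _ (Finset.mem_univ _)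
      · intro o ho
        obtain ⟨c, _, rfl⟩ := Finset.mem_image.mp ho
        obtain ⟨w, rfl⟩ := c.exists_rep
        refine Finset.mem_image.mpr ⟨w.1, Set.mem_toFinset.mpr w.2, ?_⟩
        rw [compO_eq_some G S w.1 w.2]
        rfl
    rw [hIeq, Finset.card_image_of_injective _ (Option.some_injective _), Finset.card_univ]
  have hkm : I.card ≤ T.card := Finset.card_image_le
  have hQ : (∑ o ∈ I, F o * F o) + I.card ≤
      (T.card - I.card) * (T.card - I.card) + 2 * T.card := by
    have := sum_sq_aux I F hF1
    rwa [hsumF] at this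
  -- gather the numbers
  have hk2 : S.ncard + 2 ≤ I.card := by
    rw [hIcard]
    calc S.ncard + 2 ≤ oddComp (G.induce Sᶜ) := hS
      _ ≤ Nat.card (G.induce Sᶜ).ConnectedComponent := hodd_le
      _ = _ := Nat.card_eq_fintype_card
  have hsm : S.ncard + T.card = n := by
    have h1 := Set.ncard_add_ncard_compl S (Set.toFinite S) (Set.toFinite Sᶜ)
    rw [Set.ncard_eq_toFinset_card' Sᶜ] at h1
    rw [← hT] at h1
    rw [h1, Nat.card_eq_fintype_card, Fintype.card_fin]
  obtain ⟨n3, hn3⟩ : ∃ n3, n = n3 + 3 := ⟨n - 3, by omega⟩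
  have harith := arith G.edgeFinset.card K.edgeFinset.card (∑ o ∈ I, F o * F o)
    S.ncard T.card I.card (T.card - I.card) n3 hs1 hk2 (by omega) (by omega) (by omega)
    ?_ h2EK hQ
  · -- finish
    have hEG : G.edgeSet.ncard = G.edgeFinset.card := by
      rw [← Nat.card_coe_set_eq, Nat.card_eq_fintype_card, SimpleGraph.edgeFinset_card]
    have h2c := two_mul_choose_two (n - 2)
    have heq : (n - 2) * (n - 2 - 1) = (n3 + 1) * n3 := by
      congr 1 <;> omega
    rw [heq] at h2c
    rw [hEG]
    linarith
  · calc 2 * G.edgeFinset.card + 2 * K.edgeFinset.card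
        = 2 * (G.edgeFinset.card + K.edgeFinset.card) := by ring
      _ ≤ 2 * n.choose 2 := by omega
      _ = n * (n - 1) := two_mul_choose_two n
      _ = (n3 + 3) * (n3 + 2) := by congr 1 <;> omega
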